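/- Fix an even integer P ≥ 4, β', γ > 0, θ ∈ (0,1), m̄ ∈ ℝ and 0 ≤ q̄₁ ≤ q̄₂ ≤ 1. Define the 1-RSB pressure of the hard P-spin Sherrington–Kirkpatrick model at noises β₁, β₂ by A_SK^{(P)}(m̄,q₁,q₂;β',β₁,β₂,θ) := ln 2 + θ⁻¹E₁[ln E₂[cosh^θ((P/2)β'm̄^{P−1} + J⁽¹⁾√((P/2)β₁²q₁^{P−1}) + J⁽²⁾√((P/2)(β₂²q₂^{P−1} − β₁²q₁^{P−1})))]] − ((P−1)/2)β'm̄^P + β₂²/4 + θ(P−1)(β₁²/4)q₁^P − P(β₂²/4)q₂^{P−1} + (1−θ)(P−1)(β₂²/4)q₂^P. Then, substituting the conjugate relations p̄₁ = β'q̄₁^{P/2} and p̄₂ = β'q̄₂^{P/2} in the 1-RSB limiting pressure A₁ of the dense Hebbian network, one has A₁(m̄, q̄₁, q̄₂, β'q̄₁^{P/2}, β'q̄₂^{P/2}) = A_SK^{(P)}(m̄, q̄₁, q̄₂; β', β'√γ, β'√γ, θ). In particular, for P > 2 and also in the broken replica-symmetry framework, the dense Hebbian network's quenched pressure is equivalent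 to that of the hard P-spin glass with both noise levels equal to β'√γ, with no soft (Gaussian) spin-glass contribution. -/
import Mathlib


open MeasureTheory ProbabilityTheory Real Filter

/-- Expectation of `f J` for a standard Gaussian `J ~ N(0,1)`. -/
noncomputable def gExp (f : ℝ → ℝ) : ℝ := ∫ y, f y ∂(gaussianReal 0 1)

/-- Effective field of the 1-RSB dense Hebbian network. -/
noncomputable def gfield (P : ℕ) (β' γ mb qb1 qb2 pb1 pb2 j1 j2 : ℝ) : ℝ :=
  (β' * (P : ℝ) / 2) * mb ^ (P - 1)
    + j1 * Real.sqrt ((β'/2) * γ * pb1 * (P : ℝ) * qb1 ^ (P/2 - 1))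
    + j2 * Real.sqrt ((β'/2) * γ * (P : ℝ) * (pb2 * qb2 ^ (P/2 - 1) - pb1 * qb1 ^ (P/2 - 1)))

/-- 1-RSB limiting pressure of the dense Hebbian network. -/
noncomputable def A1RSB (P : ℕ) (β' γ θ mb qb1 qb2 pb1 pb2 : ℝ) : ℝ :=
  Real.log 2
    + θ⁻¹ * gExp (fun j1 => Real.log (gExp (fun j2 =>
        Real.cosh (gfield P β' γ mb qb1 qb2 pb1 pb2 j1 j2) ^ θ)))
    - (γ * β' / 4) * qb2 ^ (P/2 - 1) * pb2 * ((P : ℝ) - ((P : ℝ) - 1) * qb2)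
    + (β'/2) * mb ^ P * (1 - (P : ℝ))
    - θ * ((P : ℝ) - 1) * (β' * γ / 4) * (qb2 ^ (P/2) * pb2 - qb1 ^ (P/2) * pb1)
    + (1/4) * β' ^ 2 * γ

/-- 1-RSB pressure of the hard P-spin Sherrington–Kirkpatrick model at noises β₁, β₂. -/
noncomputable def A_SK_P_1RSB (P : ℕ) (mb q1 q2 β' β₁ β₂ θ : ℝ) : ℝ :=
  Real.log 2
    + θ⁻¹ * gExp (fun j1 => Real.log (gExp (fun j2 =>
        Real.cosh (((P : ℝ)/2) * β' * mb ^ (P - 1)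
          + j1 * Real.sqrt (((P : ℝ)/2) * β₁ ^ 2 * q1 ^ (P - 1))
          + j2 * Real.sqrt (((P : ℝ)/2) * (β₂ ^ 2 * q2 ^ (P - 1) - β₁ ^ 2 * q1 ^ (P - 1)))) ^ θ)))
    - (((P : ℝ) - 1)/2) * β' * mb ^ P
    + β₂ ^ 2 / 4
    + θ * ((P : ℝ) - 1) * (β₁ ^ 2 / 4) * q1 ^ P
    - (P : ℝ) * (β₂ ^ 2 / 4) * q2 ^ (P - 1)
    + (1 - θ) * ((P : ℝ) - 1) * (β₂ ^ 2 / 4) * q2 ^ P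

set_option maxHeartbeats 1000000 in
theorem stmt11 (P : ℕ) (hPe : Even P) (hP : 4 ≤ P) (β' γ θ : ℝ)
    (hβ : 0 < β') (hγ : 0 < γ) (hθ : θ ∈ Set.Ioo (0:ℝ) 1)
    (mb qb1 qb2 : ℝ) (hq1 : 0 ≤ qb1) (hq12 : qb1 ≤ qb2) (hq2 : qb2 ≤ 1) :
    A1RSB P β' γ θ mb qb1 qb2 (β' * qb1 ^ (P/2)) (β' * qb2 ^ (P/2))
      = A_SK_P_1RSB P mb qb1 qb2 β' (β' * Real.sqrt γ) (β' * Real.sqrt γ) θ := by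
  obtain ⟨k, hk⟩ := hPe
  subst hk
  have hk2 : 2 ≤ k := by omega
  have hd : (k + k) / 2 = k := by omega
  have hγ' : Real.sqrt γ ^ 2 = γ := Real.sq_sqrt hγ.le
  have e1 : ∀ q : ℝ, (β'/2) * γ * (β' * q ^ k) * ((k+k : ℕ) : ℝ) * q ^ (k - 1)
      = (((k+k : ℕ) : ℝ)/2) * (β' * Real.sqrt γ) ^ 2 * q ^ (k + k - 1) := by
    intro q
    have : q ^ (k + k - 1) = q ^ k * q ^ (k - 1) := by
      rw [← pow_add]; congr 1; omega
    rw [mul_pow, hγ', this]; ring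
  have e2 : (β'/2) * γ * ((k+k : ℕ) : ℝ) * ((β' * qb2 ^ k) * qb2 ^ (k - 1) - (β' * qb1 ^ k) * qb1 ^ (k - 1))
      = (((k+k : ℕ) : ℝ)/2) * ((β' * Real.sqrt γ) ^ 2 * qb2 ^ (k + k - 1) - (β' * Real.sqrt γ) ^ 2 * qb1 ^ (k + k - 1)) := by
    have h1 : qb1 ^ (k + k - 1) = qb1 ^ k * qb1 ^ (k - 1) := by
      rw [← pow_add]; congr 1; omega
    have h2 : qb2 ^ (k + k - 1) = qb2 ^ k * qb2 ^ (k - 1) := by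
      rw [← pow_add]; congr 1; omega
    rw [mul_pow, hγ', h1, h2]; ring
  have hfield : ∀ j1 j2 : ℝ,
      gfield (k + k) β' γ mb qb1 qb2 (β' * qb1 ^ k) (β' * qb2 ^ k) j1 j2
      = (((k+k : ℕ) : ℝ)/2) * β' * mb ^ (k + k - 1)
        + j1 * Real.sqrt ((((k+k : ℕ) : ℝ)/2) * (β' * Real.sqrt γ) ^ 2 * qb1 ^ (k + k - 1))
        + j2 * Real.sqrt ((((k+k : ℕ) : ℝ)/2) * ((β' * Real.sqrt γ) ^ 2 * qb2 ^ (k + k - 1) - (β' * Real.sqrt γ) ^ 2 * qb1 ^ (k + k - 1))) := by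
    intro j1 j2
    unfold gfield
    rw [hd, e1 qb1, e2]
    ring
  unfold A1RSB A_SK_P_1RSB
  simp only [hd]
  simp only [hfield]
  have p1 : ∀ q : ℝ, q ^ k = q ^ (k - 1) * q := by
    intro q; rw [← pow_succ]; congr 1; omega
  have p2 : ∀ q : ℝ, q ^ (k + k) = q ^ (k - 1) * q ^ (k - 1) * q * q := by
    intro q
    rw [show k + k = (k - 1) + (k - 1) + 1 + 1 from by omega, pow_succ, pow_succ, pow_add]
  have p2' : ∀ q : ℝ, q ^ (k + k - 1) = q ^ (k - 1) * q ^ (k - 1) * q := by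
    intro q
    rw [show k + k - 1 = (k - 1) + (k - 1) + 1 from by omega, pow_succ, pow_add]
  simp only [mul_pow, hγ', p1, p2, p2']
  push_cast
  ring
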